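/- Let d ≥ 1 and let x ∈ ℝ^d with summatory parameter x := x_1 + ⋯ + x_d satisfying x < 1 and x ≠ 0. Set R := (−log(1 − x)/x)·Q_x. Then exp(R) = (1 − x)·I + C_x = M_x; i.e., R is a real logarithm of the equal-input matrix M_x, itself of equal-input form. If moreover all entries of x are ≥ 0 (so that 0 < x < 1), then R is a Markov generator: R has zero row sums and all off-diagonal entries of R are ≥ 0. -/

import Mathlib

open Matrix

/-- `eqRows d x` is the `d × d` real matrix all of whose rows equal the row vector `x`. -/
def eqRows (d : ℕ) (x : Fin d → ℝ) : Matrix (Fin d) (Fin d) ℝ :=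
  Matrix.of fun _ j => x j

/-- The equal-input generator `Q_x := −x·I + C_x`, where `x = ∑ᵢ xᵢ`. -/
noncomputable def Qgen (d : ℕ) (x : Fin d → ℝ) : Matrix (Fin d) (Fin d) ℝ :=
  (-(∑ i, x i)) • (1 : Matrix (Fin d) (Fin d) ℝ) + eqRows d x

/-- The real logarithm `R := (−log(1 − x)/x)·Q_x` of the equal-input matrix `M_x`. -/
noncomputable def Rlog (d : ℕ) (x : Fin d → ℝ) : Matrix (Fin d) (Fin d) ℝ :=
  (-Real.log (1 - ∑ i, x i) / ∑ i, x i) • Qgen d x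

lemma pow_idem {d : ℕ} (P : Matrix (Fin d) (Fin d) ℝ) (hP : P * P = P) :
    ∀ n : ℕ, 1 ≤ n → P ^ n = P := by
  intro n hn
  induction n with
  | zero => omega
  | succ m ih =>
    rcases Nat.eq_or_lt_of_le hn with h | h
    · simp [← h]
    · rw [pow_succ, ih (by omega), hP]

lemma exp_smul_idem {d : ℕ} (P : Matrix (Fin d) (Fin d) ℝ) (hP : P * P = P) (t : ℝ) :
    NormedSpace.exp (t • P) = 1 + (Real.exp t - 1) • P := by
  have hterm : ∀ n : ℕ, ((n.factorial : ℝ)⁻¹ • (t • P) ^ n)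
      = (t ^ n / n.factorial) • P + (if n = 0 then (1 : Matrix (Fin d) (Fin d) ℝ) - P else 0) := by
    intro n
    rcases Nat.eq_zero_or_pos n with h | h
    · subst h; simp
    · rw [smul_pow, pow_idem P hP n h, if_neg (by omega)]
      rw [smul_smul, add_zero, div_eq_inv_mul]
  have hsum1 : Summable fun n : ℕ => (t ^ n / n.factorial) • P :=
    (Real.summable_pow_div_factorial t).smul_const P
  have hsum2 : Summable fun n : ℕ =>
      (if n = 0 then (1 : Matrix (Fin d) (Fin d) ℝ) - P else 0) := by
    apply summable_of_finite_support
    apply Set.Finite.subset (Set.finite_singleton 0)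
    intro n hn
    simp only [Function.mem_support] at hn
    rcases eq_or_ne n 0 with h | h
    · exact Set.mem_singleton_iff.mpr h
    · exact absurd (if_neg h) hn
  calc NormedSpace.exp (t • P) = ∑' n : ℕ, ((n.factorial : ℝ)⁻¹ • (t • P) ^ n) := by
        rw [NormedSpace.exp_eq_tsum ℝ]
    _ = ∑' n : ℕ, ((t ^ n / n.factorial) • P
          + (if n = 0 then (1 : Matrix (Fin d) (Fin d) ℝ) - P else 0)) := by
        simp_rw [hterm]
    _ = (∑' n : ℕ, (t ^ n / n.factorial) • P)
          + ∑' n : ℕ, (if n = 0 then (1 : Matrix (Fin d) (Fin d) ℝ) - P else 0) :=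
        Summable.tsum_add hsum1 hsum2
    _ = (Real.exp t) • P + (1 - P) := by
        rw [Summable.tsum_smul_const (Real.summable_pow_div_factorial t),
          Real.exp_eq_exp_ℝ, NormedSpace.exp_eq_tsum_div]
        congr 1
        exact tsum_eq_single 0 (by intro n hn; simp [if_neg hn])
    _ = 1 + (Real.exp t - 1) • P := by
        rw [sub_smul, one_smul]; abel

lemma eqRows_mul_self {d : ℕ} (x : Fin d → ℝ) :
    eqRows d x * eqRows d x = (∑ i, x i) • eqRows d x := by
  ext i j
  simp [eqRows, Matrix.mul_apply, ← Finset.sum_mul]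

/-- if `x = ∑ᵢ xᵢ` satisfies `x < 1` and `x ≠ 0`, then
`exp(R) = (1 − x)·I + C_x = M_x` with `R := (−log(1 − x)/x)·Q_x`; and if all entries of `x`
are nonnegative then `R` is a Markov generator (zero row sums, nonnegative off-diagonal). -/
theorem stmt10 (d : ℕ) (hd : 1 ≤ d) (x : Fin d → ℝ)
    (h1 : ∑ i, x i < 1) (h0 : ∑ i, x i ≠ 0) :
    NormedSpace.exp (Rlog d x) =
      (1 - ∑ i, x i) • (1 : Matrix (Fin d) (Fin d) ℝ) + eqRows d x ∧
    ((∀ i, 0 ≤ x i) →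
      (∀ i, ∑ j, Rlog d x i j = 0) ∧ (∀ i j, i ≠ j → 0 ≤ Rlog d x i j)) := by
  set s : ℝ := ∑ i, x i with hs
  set P : Matrix (Fin d) (Fin d) ℝ := 1 - s⁻¹ • eqRows d x with hPdef
  have key : eqRows d x * eqRows d x = s • eqRows d x := by
    rw [hs]; exact eqRows_mul_self x
  have hP : P * P = P := by
    rw [hPdef]
    simp only [sub_mul, mul_sub, one_mul, mul_one, Matrix.smul_mul, Matrix.mul_smul, key,
      smul_smul]
    rw [show s⁻¹ * (s⁻¹ * s) = s⁻¹ by field_simp]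
    abel
  set t : ℝ := Real.log (1 - s) with ht
  have hR : Rlog d x = t • P := by
    rw [Rlog, Qgen, hPdef, ← hs, ← ht]
    rw [smul_add, smul_smul, smul_sub, smul_smul,
      show -t / s * -s = t by rw [neg_div, neg_mul_neg, div_mul_cancel₀ t h0],
      show -t / s = -(t * s⁻¹) by ring, neg_smul, ← sub_eq_add_neg]
  have hexp : Real.exp t = 1 - s := Real.exp_log (by linarith)
  constructor
  · rw [hR, exp_smul_idem P hP t, hexp, hPdef]
    rw [smul_sub, smul_smul]
    rw [show (1 - s - 1) * s⁻¹ = -1 by field_simp; ring]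
    rw [sub_smul, one_smul, neg_smul, one_smul, sub_neg_eq_add]
    abel
  · intro hx
    have hspos : 0 < s := by
      rcases lt_or_eq_of_le (Finset.sum_nonneg fun i _ => hx i) with h | h
      · exact h
      · exact absurd h.symm h0
    have hco : 0 ≤ -t / s := by
      apply div_nonneg _ hspos.le
      rw [ht, neg_nonneg]
      exact Real.log_nonpos (by linarith) (by linarith)
    constructor
    · intro i
      simp only [Rlog, Qgen, ← hs, Matrix.smul_apply, Matrix.add_apply, Matrix.smul_apply,
        Matrix.one_apply, eqRows, Matrix.of_apply, smul_eq_mul]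
      rw [← Finset.mul_sum]
      rw [Finset.sum_add_distrib]
      simp [Finset.sum_ite_eq, mul_ite, ← hs]
    · intro i j hij
      simp only [Rlog, Qgen, ← hs, Matrix.smul_apply, Matrix.add_apply, Matrix.smul_apply,
        Matrix.one_apply, eqRows, Matrix.of_apply, smul_eq_mul, if_neg hij, mul_zero]
      have : (0:ℝ) ≤ x j := hx j
      positivity
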